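/- The linear map φ_∞ : W_∞ → W_∞ is surjective. -/

import Mathlib

open Polynomial

/-- Preimage of `single n u` when `u` is killed by a power of `ψ`. -/
lemma aux_nilpotent {W : Type*} [AddCommGroup W] [Module ℂ W]
    (ψ : Module.End ℂ W)
    (Φ : (ℕ →₀ W) →ₗ[ℂ] (ℕ →₀ W))
    (hΦ : ∀ (k : ℕ) (w : W),
      Φ (Finsupp.single k w) =
        Finsupp.single k (ψ w) -
          (if k = 0 then 0 else Finsupp.single (k - 1) w)) :
    ∀ (m n : ℕ) (u : W), (ψ ^ m) u = 0 → ∃ x, Φ x = Finsupp.single n u := by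
  intro m
  induction m with
  | zero =>
    intro n u hu
    rw [pow_zero, Module.End.one_apply] at hu
    exact ⟨0, by simp [hu]⟩
  | succ m ih =>
    intro n u hu
    have hpsu : (ψ ^ m) (ψ u) = 0 := by
      rw [← Module.End.mul_apply, ← pow_succ]; exact hu
    obtain ⟨x', hx'⟩ := ih (n + 1) (ψ u) hpsu
    refine ⟨x' - Finsupp.single (n + 1) u, ?_⟩
    rw [map_sub, hx', hΦ]
    simp

/-- Preimage of `single n (g 0)` when `g` is a chain: `ψ (g (j+1)) = g j`. -/
lemma aux_chain {W : Type*} [AddCommGroup W] [Module ℂ W]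
    (ψ : Module.End ℂ W)
    (Φ : (ℕ →₀ W) →ₗ[ℂ] (ℕ →₀ W))
    (hΦ : ∀ (k : ℕ) (w : W),
      Φ (Finsupp.single k w) =
        Finsupp.single k (ψ w) -
          (if k = 0 then 0 else Finsupp.single (k - 1) w)) :
    ∀ (n : ℕ) (g : ℕ → W), (∀ j, ψ (g (j + 1)) = g j) → ∃ x, Φ x = Finsupp.single n (g 0) := by
  intro n
  induction n with
  | zero =>
    intro g hg
    exact ⟨Finsupp.single 0 (g 1), by rw [hΦ]; simp [hg 0]⟩
  | succ n ih =>
    intro g hg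
    obtain ⟨x', hx'⟩ := ih (fun j => g (j + 1)) (fun j => hg (j + 1))
    refine ⟨Finsupp.single (n + 1) (g 1) + x', ?_⟩
    rw [map_add, hx', hΦ]
    simp [hg 0]

theorem phi_infty_surjective {W : Type*} [AddCommGroup W] [Module ℂ W]
    (φ : Module.End ℂ W)
    (hmin : ∃ p : Polynomial ℂ, p ≠ 0 ∧ Polynomial.aeval φ p = 0)
    (α : ℂ)
    (Φ : (ℕ →₀ W) →ₗ[ℂ] (ℕ →₀ W))
    (hΦ : ∀ (k : ℕ) (w : W),
      Φ (Finsupp.single k w) =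
        Finsupp.single k ((φ - α • 1) w) -
          (if k = 0 then 0 else Finsupp.single (k - 1) w)) :
    Function.Surjective Φ := by
  classical
  obtain ⟨p, hp0, hp⟩ := hmin
  set ψ : Module.End ℂ W := φ - α • 1 with hψ
  -- the polynomial killed by ψ
  set q : Polynomial ℂ := p.comp (X + C α) with hqdef
  have hq0 : q ≠ 0 := comp_X_add_C_ne_zero_iff.mpr hp0
  have hqψ : aeval ψ q = 0 := by
    rw [hqdef, aeval_comp]
    have h1 : aeval ψ (X + C α) = φ := by
      simp [hψ, Algebra.algebraMap_eq_smul_one]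
    rw [h1, hp]
  -- factor q = X^m * s with s.coeff 0 ≠ 0
  obtain ⟨s, hqs, hXs⟩ := q.exists_eq_pow_rootMultiplicity_mul_and_not_dvd hq0 0
  set m : ℕ := q.rootMultiplicity 0 with hm
  rw [C_0, sub_zero] at hqs hXs
  have hc : s.coeff 0 ≠ 0 := by rwa [X_dvd_iff] at hXs
  set c : ℂ := s.coeff 0 with hcdef
  have hcinv : (C c⁻¹ : Polynomial ℂ) * C c = 1 := by
    rw [← C_mul, inv_mul_cancel₀ hc, C_1]
  -- X^m and s are coprime
  have hcop : IsCoprime ((X : Polynomial ℂ) ^ m) s := by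
    apply IsCoprime.pow_left
    exact (Polynomial.irreducible_X.coprime_iff_not_dvd).mpr hXs
  obtain ⟨a, b, hab⟩ := hcop
  -- it suffices to hit every single
  have key : ∀ (n : ℕ) (w : W), ∃ x, Φ x = Finsupp.single n w := by
    intro n w
    -- split w
    set u : W := (aeval ψ (b * s)) w with hu
    set v : W := (aeval ψ (a * X ^ m)) w with hv
    have hw : w = u + v := by
      have h2 : (b * s + a * X ^ m : Polynomial ℂ) = 1 := by linear_combination hab
      have : aeval ψ (b * s) + aeval ψ (a * X ^ m) = 1 := by
        rw [← map_add, h2, map_one]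
      calc w = ((aeval ψ (b * s) + aeval ψ (a * X ^ m))) w := by rw [this]; rfl
        _ = u + v := rfl
    -- nilpotent part
    have hXm : aeval ψ ((X : Polynomial ℂ) ^ m) = ψ ^ m := by rw [map_pow, aeval_X]
    have hun : (ψ ^ m) u = 0 := by
      have hpoly : (X : Polynomial ℂ) ^ m * (b * s) = b * q := by
        linear_combination b * hqs.symm
      calc (ψ ^ m) u = (aeval ψ ((X : Polynomial ℂ) ^ m) * aeval ψ (b * s)) w := by
            rw [hXm]; rfl
        _ = (aeval ψ ((X : Polynomial ℂ) ^ m * (b * s))) w := by simp only [map_mul]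
        _ = (aeval ψ b * aeval ψ q) w := by rw [hpoly, map_mul]
        _ = 0 := by rw [Module.End.mul_apply, hqψ, LinearMap.zero_apply, map_zero]
    -- chain part: β is an "inverse" of X modulo q on multiples of X^m
    set β : Polynomial ℂ := C (-c⁻¹) * s.divX with hβ
    have hkey : (X : Polynomial ℂ) * β * X ^ m = X ^ m - C c⁻¹ * q := by
      have hs : (X : Polynomial ℂ) * s.divX + C c = s := X_mul_divX_add s
      rw [hβ, hqs, C_neg]
      linear_combination (-(C c⁻¹) * X ^ m) * hs + ((X : Polynomial ℂ) ^ m) * hcinv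
    set g : ℕ → W := fun j => (aeval ψ (β ^ j * (a * X ^ m))) w with hg
    have hchain : ∀ j, ψ (g (j + 1)) = g j := by
      intro j
      have hpoly : (X : Polynomial ℂ) * (β ^ (j + 1) * (a * X ^ m)) =
          β ^ j * (a * X ^ m) - (C c⁻¹ * (β ^ j * a)) * q := by
        linear_combination (β ^ j * a) * hkey
      have hend : ψ * aeval ψ (β ^ (j + 1) * (a * X ^ m)) =
          aeval ψ (β ^ j * (a * X ^ m)) := by
        calc ψ * aeval ψ (β ^ (j + 1) * (a * X ^ m))
            = aeval ψ ((X : Polynomial ℂ) * (β ^ (j + 1) * (a * X ^ m))) := by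
              simp only [map_mul, aeval_X]
          _ = aeval ψ (β ^ j * (a * X ^ m)) -
                aeval ψ (C c⁻¹ * (β ^ j * a)) * aeval ψ q := by
              rw [hpoly]; simp only [map_sub, map_mul]
          _ = _ := by rw [hqψ, mul_zero, sub_zero]
      calc ψ (g (j + 1)) = (ψ * aeval ψ (β ^ (j + 1) * (a * X ^ m))) w := rfl
        _ = g j := by rw [hend]
    have hg0 : g 0 = v := by simp [hg, hv]
    obtain ⟨x1, hx1⟩ := aux_nilpotent ψ Φ hΦ m n u hun
    obtain ⟨x2, hx2⟩ := aux_chain ψ Φ hΦ n g hchain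
    exact ⟨x1 + x2, by rw [map_add, hx1, hx2, hg0, ← Finsupp.single_add, ← hw]⟩
  -- conclude by Finsupp induction
  intro y
  induction y using Finsupp.induction with
  | zero => exact ⟨0, map_zero Φ⟩
  | single_add n w f _ _ ih =>
    obtain ⟨x1, hx1⟩ := key n w
    obtain ⟨x2, hx2⟩ := ih
    exact ⟨x1 + x2, by rw [map_add, hx1, hx2]⟩
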